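/- Let C be a set of cluster centers such that every vertex of G is within distance D^B_opt of some center (in G), and let u be any vertex. Let G'_B be a B-augmentation of G such that the height of SPT(G'_B, C, u) equals the height of the minimum-height B-budget shortest path tree MH_B-SPT(G,C,u). Then the diameter of G'_B is at most 4·D^B_opt. -/

import Mathlib

open SimpleGraph
open scoped ENNReal


open scoped ENNReal

open scoped ENNReal

noncomputable def walkWeight {V : Type*} {G : SimpleGraph V} (w : V → V → ℝ≥0∞) {u v : V}
    (p : G.Walk u v) : ℝ≥0∞ :=
  (p.darts.map fun d => w d.toProd.1 d.toProd.2).sum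

noncomputable def wdist {V : Type*} (G : SimpleGraph V) (w : V → V → ℝ≥0∞) (u v : V) : ℝ≥0∞ :=
  ⨅ p : G.Walk u v, walkWeight w p

noncomputable def wdiam {V : Type*} (G : SimpleGraph V) (w : V → V → ℝ≥0∞) : ℝ≥0∞ :=
  ⨆ x, ⨆ y, wdist G w x y

def IsAug {V : Type*} (G : SimpleGraph V) (cst : Sym2 V → ℕ) (B : ℕ)
    (G' : SimpleGraph V) : Prop :=
  ∃ F : Finset (Sym2 V), (∀ e ∈ F, e ∉ G.edgeSet ∧ ¬ e.IsDiag) ∧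
    (∑ e ∈ F, cst e) ≤ B ∧ G' = G ⊔ SimpleGraph.fromEdgeSet ↑F

/-- `T` is a shortest path tree of `G'`, `C` and root `u`: a tree (as a subgraph of `G'`)
containing `u` and `C` in which the distance from `u` to each `c ∈ C` equals the
distance in `G'`. -/
structure IsSPT {V : Type*} (G' : SimpleGraph V) (w : V → V → ℝ≥0∞) (C : Set V) (u : V)
    (T : G'.Subgraph) : Prop where
  u_mem : u ∈ T.verts
  C_sub : C ⊆ T.verts
  tree : T.coe.IsTree
  dist_eq : ∀ x, ∀ hx : x ∈ C,
    wdist T.coe (fun a b => w a.1 b.1) ⟨u, u_mem⟩ ⟨x, C_sub hx⟩ = wdist G' w u x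

/-- The height of a rooted weighted tree: the maximum weight of a path from the root. -/
noncomputable def sptHeight {V : Type*} (G' : SimpleGraph V) (w : V → V → ℝ≥0∞)
    (T : G'.Subgraph) (u : V) (hu : u ∈ T.verts) : ℝ≥0∞ :=
  ⨆ x : T.verts, wdist T.coe (fun a b => w a.1 b.1) ⟨u, hu⟩ x

/-- The height of a Minimum Height_B SPT of `G`, `C` and `u`: the minimum height of a
shortest path tree of `G_B`, `C`, `u` over all `B`-augmentations `G_B` of `G`. -/
noncomputable def gammaH {V : Type*} (G : SimpleGraph V) (w : V → V → ℝ≥0∞)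
    (cst : Sym2 V → ℕ) (B : ℕ) (C : Set V) (u : V) : ℝ≥0∞ :=
  ⨅ (G' : SimpleGraph V) (_ : IsAug G cst B G') (T : G'.Subgraph)
    (h : IsSPT G' w C u T), sptHeight G' w T u h.u_mem



namespace SPTAux
variable {V : Type*} {G : SimpleGraph V} (w : V → V → ℝ≥0∞)

lemma walkWeight_nil {u : V} : walkWeight w (Walk.nil : G.Walk u u) = 0 := rfl

lemma walkWeight_cons {a b c : V} (h : G.Adj a b) (p : G.Walk b c) :
    walkWeight w (Walk.cons h p) = w a b + walkWeight w p := by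
  simp [walkWeight, Walk.darts_cons]

lemma walkWeight_append {a b c : V} (p : G.Walk a b) (q : G.Walk b c) :
    walkWeight w (p.append q) = walkWeight w p + walkWeight w q := by
  simp [walkWeight, Walk.darts_append]

lemma walkWeight_reverse (hw : ∀ x y, w x y = w y x) {a b : V} (p : G.Walk a b) :
    walkWeight w p.reverse = walkWeight w p := by
  rw [walkWeight, walkWeight, Walk.darts_reverse, List.map_reverse, List.sum_reverse,
    List.map_map]
  refine congrArg List.sum (List.map_congr_left fun d _ => ?_)
  simp only [Function.comp_apply, Dart.symm_toProd, Prod.fst_swap, Prod.snd_swap]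
  exact (hw d.toProd.1 d.toProd.2).symm

lemma wdist_le {a b : V} (p : G.Walk a b) : wdist G w a b ≤ walkWeight w p := iInf_le _ p

lemma wdist_self (a : V) : wdist G w a a = 0 :=
  le_antisymm (wdist_le w Walk.nil) (zero_le)

lemma wdist_triangle (a b c : V) :
    wdist G w a c ≤ wdist G w a b + wdist G w b c := by
  show wdist G w a c ≤ (⨅ p : G.Walk a b, walkWeight w p) + ⨅ q : G.Walk b c, walkWeight w q
  rw [ENNReal.iInf_add]
  refine le_iInf fun p => ?_
  rw [ENNReal.add_iInf]
  refine le_iInf fun q => ?_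
  exact (wdist_le w (p.append q)).trans_eq (walkWeight_append w p q)

lemma wdist_comm (hw : ∀ x y, w x y = w y x) (a b : V) :
    wdist G w a b = wdist G w b a := by
  refine le_antisymm ?_ ?_ <;>
    exact le_iInf fun p => (wdist_le w p.reverse).trans_eq (walkWeight_reverse w hw p)

lemma walkWeight_map {α β : Type*} {G : SimpleGraph α} {H : SimpleGraph β} (f : G →g H)
    (wG : α → α → ℝ≥0∞) (wH : β → β → ℝ≥0∞)
    (hf : ∀ a b, G.Adj a b → wG a b = wH (f a) (f b))
    {a b : α} (p : G.Walk a b) : walkWeight wH (p.map f) = walkWeight wG p := by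
  induction p with
  | nil => rfl
  | cons h p ih =>
    rw [Walk.map_cons, walkWeight_cons, walkWeight_cons, ih, hf _ _ h]

lemma wdist_map_le {α β : Type*} {G : SimpleGraph α} {H : SimpleGraph β} (f : G →g H)
    (wG : α → α → ℝ≥0∞) (wH : β → β → ℝ≥0∞)
    (hf : ∀ a b, G.Adj a b → wG a b = wH (f a) (f b)) (a b : α) :
    wdist H wH (f a) (f b) ≤ wdist G wG a b :=
  le_iInf fun p => (wdist_le wH (p.map f)).trans_eq (walkWeight_map f wG wH hf p)

lemma wdist_le_wdiam (a b : V) : wdist G w a b ≤ wdiam G w :=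
  le_iSup₂ (f := fun x y => wdist G w x y) a b

lemma nonempty_walk_of_wdist_ne_top {a b : V} (h : wdist G w a b ≠ ⊤) :
    Nonempty (G.Walk a b) := by
  by_contra hne
  rw [not_nonempty_iff] at hne
  exact h (by rw [wdist, iInf_of_empty])

lemma walkWeight_bypass_le [DecidableEq V] {a b : V} (p : G.Walk a b) :
    walkWeight w p.bypass ≤ walkWeight w p := by
  have hnd : p.bypass.darts.Nodup :=
    Walk.darts_nodup_of_support_nodup p.bypass_isPath.support_nodup
  obtain ⟨l, hperm, hsub⟩ := hnd.subperm p.darts_bypass_subset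
  calc walkWeight w p.bypass
      = (l.map fun d => w d.toProd.1 d.toProd.2).sum := by
        rw [walkWeight]
        exact (List.Perm.sum_eq (hperm.map _)).symm
    _ ≤ walkWeight w p := List.Sublist.sum_le_sum (hsub.map _) (fun a _ => zero_le)

lemma exists_spt {V : Type*} [Fintype V] (G' : SimpleGraph V)
    (w : V → V → ℝ≥0∞) (hw : ∀ x y, w x y = w y x) (u : V) (C : Set V)
    (hfin : ∀ v : V, wdist G' w u v ≠ ⊤) :
    ∃ (T : G'.Subgraph) (h : IsSPT G' w C u T),
      sptHeight G' w T u h.u_mem ≤ wdiam G' w := by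
  classical
  have hne : ∀ v : V, Nonempty (G'.Path u v) := fun v =>
    let ⟨p⟩ := nonempty_walk_of_wdist_ne_top w (hfin v)
    ⟨⟨p.bypass, p.bypass_isPath⟩⟩
  have hex : ∀ v : V, ∃ p : G'.Path u v, ∀ q : G'.Path u v,
      (toLex (walkWeight w p.1, p.1.length)) ≤ toLex (walkWeight w q.1, q.1.length) := by
    intro v
    obtain ⟨p, -, hp⟩ := Finset.exists_min_image (Finset.univ : Finset (G'.Path u v))
      (fun p => toLex (walkWeight w p.1, p.1.length)) ⟨(hne v).some, Finset.mem_univ _⟩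
    exact ⟨p, fun q => hp q (Finset.mem_univ q)⟩
  choose pmin hpmin using hex
  set d : V → ℝ≥0∞ := fun v => wdist G' w u v with hd
  have hweight_min : ∀ v (q : G'.Walk u v), walkWeight w (pmin v).1 ≤ walkWeight w q := by
    intro v q
    have h1 := hpmin v ⟨q.bypass, q.bypass_isPath⟩
    have h2 : walkWeight w (pmin v).1 ≤ walkWeight w q.bypass := by
      rcases Prod.Lex.le_iff.mp h1 with h | ⟨h, -⟩
      · exact h.le
      · exact h.le
    exact h2.trans (walkWeight_bypass_le w q)
  have hdeq : ∀ v, d v = walkWeight w (pmin v).1 := fun v =>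
    le_antisymm (wdist_le w _) (le_iInf (hweight_min v))
  set rank : V → ℕ := fun v => (pmin v).1.length with hrank
  have hpar_ex : ∀ v : V, v ≠ u → ∃ x : V, G'.Adj x v ∧ d v = d x + w x v ∧ rank x < rank v := by
    intro v hvu
    obtain ⟨x, hadj, q, hq⟩ := Walk.exists_eq_cons_of_ne hvu ((pmin v).1.reverse)
    have hqpath : q.reverse.IsPath := by
      have h0 : (Walk.cons hadj q).IsPath := hq ▸ (pmin v).2.reverse
      exact h0.of_cons.reverse
    have hwv : walkWeight w (pmin v).1 = w v x + walkWeight w q := by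
      rw [← walkWeight_reverse w hw, hq, walkWeight_cons]
    have hfv : d v ≠ ⊤ := hfin v
    have hwvx_ne : w x v ≠ ⊤ := by
      intro h
      apply hfv
      rw [hdeq, hwv, hw v x, h]
      simp
    have hdx_le : d x ≤ walkWeight w q := by
      have h0 := wdist_le w q.reverse
      rwa [walkWeight_reverse w hw] at h0
    have hdv_le : d v ≤ d x + w x v := by
      have h1 := wdist_triangle (G := G') w u x v
      have h2 : wdist G' w x v ≤ w x v := by
        have h3 := wdist_le w (Walk.cons hadj.symm Walk.nil)
        rwa [walkWeight_cons, walkWeight_nil, add_zero] at h3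
      exact h1.trans (add_le_add_right h2 _)
    have hqv : d v = walkWeight w q + w x v := by
      rw [hdeq, hwv, hw v x, add_comm]
    have hdv_eq : d v = d x + w x v :=
      le_antisymm hdv_le (by rw [hqv]; exact add_le_add_left hdx_le _)
    have hdx_eq : d x = walkWeight w q := by
      have h0 : d x + w x v = walkWeight w q + w x v := by rw [← hdv_eq, hqv]
      exact WithTop.add_right_cancel hwvx_ne h0
    have hlenv : rank v = q.length + 1 := by
      have h0 : (pmin v).1.reverse.length = q.length + 1 := by rw [hq, Walk.length_cons]
      rw [hrank]
      simpa [Walk.length_reverse] using h0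
    have hrk : rank x < rank v := by
      have h1 := hpmin x ⟨q.reverse, hqpath⟩
      have hwq : walkWeight w (pmin x).1 = walkWeight w q.reverse := by
        rw [← hdeq, hdx_eq, walkWeight_reverse w hw]
      rcases Prod.Lex.le_iff.mp h1 with h | ⟨-, h⟩
      · exact absurd hwq (ne_of_lt h)
      · have h2 : rank x ≤ q.length := by
          simpa [Walk.length_reverse] using h
        omega
    exact ⟨x, hadj.symm, hdv_eq, hrk⟩
  choose par hpar1 hpar2 hpar3 using hpar_ex
  set parf : V → V := fun v => if h : v = u then u else par v h with hparf
  have hp1 : ∀ v (h : v ≠ u), G'.Adj (parf v) v := by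
    intro v h; rw [hparf]; simpa [dif_neg h] using hpar1 v h
  have hp2 : ∀ v (h : v ≠ u), d v = d (parf v) + w (parf v) v := by
    intro v h; rw [hparf]; simpa [dif_neg h] using hpar2 v h
  have hp3 : ∀ v (h : v ≠ u), rank (parf v) < rank v := by
    intro v h; rw [hparf]; simpa [dif_neg h] using hpar3 v h
  set T : G'.Subgraph :=
    { verts := Set.univ
      Adj := fun a b => (b ≠ u ∧ a = parf b) ∨ (a ≠ u ∧ b = parf a)
      adj_sub := by
        rintro a b (⟨hb, rfl⟩ | ⟨ha, rfl⟩)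
        · exact hp1 b hb
        · exact (hp1 a ha).symm
      edge_vert := fun _ => Set.mem_univ _
      symm := by
        constructor
        rintro a b (h | h)
        · exact Or.inr h
        · exact Or.inl h } with hT
  have hTadj : ∀ v (h : v ≠ u), T.Adj (parf v) v := fun v h => Or.inl ⟨h, rfl⟩
  -- tree distance ≤ d
  have hstep : ∀ v (h : v ≠ u),
      wdist T.coe (fun a b => w a.1 b.1) ⟨parf v, Set.mem_univ _⟩ ⟨v, Set.mem_univ _⟩
        ≤ w (parf v) v := by
    intro v h
    have hadj : T.coe.Adj ⟨parf v, Set.mem_univ _⟩ ⟨v, Set.mem_univ _⟩ := hTadj v h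
    have h3 := wdist_le (G := T.coe) (fun a b => w a.1 b.1) (Walk.cons hadj Walk.nil)
    rwa [walkWeight_cons, walkWeight_nil, add_zero] at h3
  have htree_le : ∀ n (v : V), rank v ≤ n →
      wdist T.coe (fun a b => w a.1 b.1) ⟨u, Set.mem_univ _⟩ ⟨v, Set.mem_univ _⟩ ≤ d v := by
    intro n
    induction n with
    | zero =>
      intro v hv
      by_cases hvu : v = u
      · subst hvu; rw [wdist_self]; exact zero_le
      · exact absurd (hp3 v hvu) (by omega)
    | succ n ih =>
      intro v hv
      by_cases hvu : v = u
      · subst hvu; rw [wdist_self]; exact zero_le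
      · calc wdist T.coe (fun a b => w a.1 b.1) ⟨u, Set.mem_univ _⟩ ⟨v, Set.mem_univ _⟩
            ≤ wdist T.coe (fun a b => w a.1 b.1) ⟨u, Set.mem_univ _⟩ ⟨parf v, Set.mem_univ _⟩
              + wdist T.coe (fun a b => w a.1 b.1) ⟨parf v, Set.mem_univ _⟩
                ⟨v, Set.mem_univ _⟩ := wdist_triangle _ _ _ _
          _ ≤ d (parf v) + w (parf v) v := by
              refine add_le_add (ih (parf v) ?_) (hstep v hvu)
              have := hp3 v hvu; omega
          _ = d v := (hp2 v hvu).symm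
  have hhom_le : ∀ v : V, d v ≤
      wdist T.coe (fun a b => w a.1 b.1) ⟨u, Set.mem_univ _⟩ ⟨v, Set.mem_univ _⟩ := by
    intro v
    exact wdist_map_le T.hom (fun a b => w a.1 b.1) w (fun a b _ => rfl)
      ⟨u, Set.mem_univ _⟩ ⟨v, Set.mem_univ _⟩
  have heq : ∀ v : V,
      wdist T.coe (fun a b => w a.1 b.1) ⟨u, Set.mem_univ _⟩ ⟨v, Set.mem_univ _⟩ = d v :=
    fun v => le_antisymm (htree_le (rank v) v le_rfl) (hhom_le v)
  have hconn : T.coe.Connected := by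
    rw [connected_iff]
    refine ⟨fun a b => ?_, ⟨⟨u, Set.mem_univ _⟩⟩⟩
    have hre : ∀ c : T.verts, T.coe.Reachable ⟨u, Set.mem_univ _⟩ c := by
      intro c
      have h1 : wdist T.coe (fun a b => w a.1 b.1) ⟨u, Set.mem_univ _⟩ c ≠ ⊤ := by
        have h2 := heq c.1
        have h3 : (⟨c.1, Set.mem_univ _⟩ : T.verts) = c := Subtype.ext rfl
        rw [h3] at h2
        rw [h2]
        exact hfin c.1
      exact nonempty_walk_of_wdist_ne_top _ h1
    exact (hre a).symm.trans (hre b)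
  have hacyc : T.coe.IsAcyclic := by
    intro x c hc
    have hxt : x ∈ c.support.tail := by
      obtain ⟨y, h1, q, hq⟩ := Walk.not_nil_iff.mp hc.not_nil
      rw [hq, Walk.support_cons, List.tail_cons]
      exact q.end_mem_support
    obtain ⟨vm, hvm_mem, hvm_max⟩ := Finset.exists_max_image c.support.tail.toFinset
      (fun a : T.verts => rank a.1) ⟨x, List.mem_toFinset.mpr hxt⟩
    have hvm_sup : vm ∈ c.support := List.mem_of_mem_tail (List.mem_toFinset.mp hvm_mem)
    have hc' : (c.rotate vm hvm_sup).IsCycle := Walk.IsCycle.rotate hvm_sup hc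
    have htail_max : ∀ y : T.verts, y ∈ (c.rotate vm hvm_sup).support.tail →
        rank y.1 ≤ rank vm.1 := by
      intro y hy
      have h1 : y ∈ c.support.tail := (Walk.support_rotate c vm hvm_sup).mem_iff.mp hy
      exact hvm_max y (List.mem_toFinset.mpr h1)
    obtain ⟨a, h1, q, hq⟩ := Walk.not_nil_iff.mp hc'.not_nil
    have hlq : 2 ≤ q.length := by
      have h2 := hc'.three_le_length
      rw [hq, Walk.length_cons] at h2
      omega
    have hqnn : ¬ q.reverse.Nil := by
      rw [Walk.nil_iff_length_eq, Walk.length_reverse]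
      omega
    obtain ⟨b, h2, r, hr⟩ := Walk.not_nil_iff.mp hqnn
    have hnodup : (c.rotate vm hvm_sup).edges.Nodup := hc'.isCircuit.isTrail.edges_nodup
    have hmem_b : s(vm, b) ∈ q.edges := by
      have h3 : s(vm, b) ∈ q.reverse.edges := by
        rw [hr, Walk.edges_cons]
        exact List.mem_cons_self
      rwa [Walk.edges_reverse, List.mem_reverse] at h3
    have hab : a ≠ b := by
      intro h
      subst h
      have h4 : s(vm, a) ∉ q.edges := by
        have h5 := hnodup
        rw [hq, Walk.edges_cons] at h5
        exact (List.nodup_cons.mp h5).1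
      exact h4 hmem_b
    have ha_mem : a ∈ (c.rotate vm hvm_sup).support.tail := by
      rw [hq, Walk.support_cons, List.tail_cons]
      exact q.start_mem_support
    have hb_mem : b ∈ (c.rotate vm hvm_sup).support.tail := by
      rw [hq, Walk.support_cons, List.tail_cons]
      have h3 : b ∈ q.reverse.support := by
        rw [hr, Walk.support_cons]
        exact List.mem_cons_of_mem _ r.start_mem_support
      rwa [Walk.support_reverse, List.mem_reverse] at h3
    have key : ∀ y : T.verts, T.coe.Adj vm y → y ∈ (c.rotate vm hvm_sup).support.tail →
        y.1 = parf vm.1 := by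
      intro y hadj hy
      rcases hadj with ⟨hyne, hpareq⟩ | ⟨-, hpareq⟩
      · exfalso
        have h5 : rank (parf y.1) < rank y.1 := hp3 y.1 hyne
        rw [← hpareq] at h5
        exact absurd (htail_max y hy) (by omega)
      · exact hpareq
    have hA := key a h1 ha_mem
    have hB := key b h2 hb_mem
    exact hab (Subtype.ext (hA.trans hB.symm))
  have hspt : IsSPT G' w C u T :=
    { u_mem := Set.mem_univ _
      C_sub := fun c _ => Set.mem_univ _
      tree := ⟨hconn, hacyc⟩
      dist_eq := fun x hx => heq x }
  refine ⟨T, hspt, ?_⟩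
  rw [sptHeight]
  refine iSup_le fun x => ?_
  have h1 : (⟨x.1, Set.mem_univ _⟩ : T.verts) = x := Subtype.ext rfl
  have h2 := heq x.1
  rw [h1] at h2
  rw [h2]
  exact wdist_le_wdiam w u x.1

end SPTAux

/-- If every vertex is within `D^B_opt` of a center of `C` in `G`, and `G'_B` is a
`B`-augmentation admitting an SPT of `C` rooted at `u` whose height equals that of a
minimum-height `B`-budget SPT, then the diameter of `G'_B` is at most `4·D^B_opt`. -/
theorem stmt10 {V : Type*} [Fintype V] (G : SimpleGraph V) (w : V → V → ℝ≥0∞)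
    (hw : ∀ x y, w x y = w y x) (cst : Sym2 V → ℕ) (B : ℕ) (C : Set V) (u : V)
    (Dopt : ℝ≥0∞)
    (hDopt : Dopt = ⨅ (G' : SimpleGraph V) (_ : IsAug G cst B G'), wdiam G' w)
    (hcov : ∀ v : V, ∃ ct ∈ C, wdist G w v ct ≤ Dopt)
    (G'B : SimpleGraph V) (haug : IsAug G cst B G'B)
    (T : G'B.Subgraph) (hT : IsSPT G'B w C u T)
    (hmin : sptHeight G'B w T u hT.u_mem = gammaH G w cst B C u) :
    wdiam G'B w ≤ 4 * Dopt := by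
  classical
  by_cases hDtop : Dopt = ⊤
  · rw [hDtop, ENNReal.mul_top (by norm_num : (4:ℝ≥0∞) ≠ 0)]
    exact le_top
  cases isEmpty_or_nonempty V with
  | inl hemp =>
    have h0 : wdiam G'B w = 0 := by
      rw [wdiam]
      simp
    rw [h0]
    exact zero_le
  | inr hne =>
    have hgam : gammaH G w cst B C u ≤ Dopt := by
      refine ENNReal.le_of_forall_pos_le_add fun ε hε hlt => ?_
      have hlt2 : (⨅ (G' : SimpleGraph V) (_ : IsAug G cst B G'), wdiam G' w) < Dopt + ε := by
        rw [← hDopt]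
        exact ENNReal.lt_add_right hDtop (by exact_mod_cast hε.ne')
      obtain ⟨G2, hG2⟩ := iInf_lt_iff.mp hlt2
      obtain ⟨haug2, hdiam2⟩ := iInf_lt_iff.mp hG2
      have htop : Dopt + ε ≠ ⊤ := ENNReal.add_ne_top.mpr ⟨hDtop, ENNReal.coe_ne_top⟩
      have hfin : ∀ v : V, wdist G2 w u v ≠ ⊤ := fun v =>
        ((SPTAux.wdist_le_wdiam w u v).trans_lt
          (hdiam2.trans_le (le_top.trans_eq rfl) |>.trans_le le_top)).ne
      obtain ⟨T2, h2, hh⟩ := SPTAux.exists_spt G2 w hw u C hfin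
      calc gammaH G w cst B C u ≤ sptHeight G2 w T2 u h2.u_mem := by
            rw [gammaH]
            refine iInf_le_of_le G2 (iInf_le_of_le haug2 (iInf_le_of_le T2 ?_))
            exact iInf_le _ h2
        _ ≤ wdiam G2 w := hh
        _ ≤ Dopt + ε := hdiam2.le
    have hub : ∀ c, c ∈ C → wdist G'B w u c ≤ Dopt := by
      intro c hc
      rw [← hT.dist_eq c hc]
      calc wdist T.coe (fun a b => w a.1 b.1) ⟨u, hT.u_mem⟩ ⟨c, hT.C_sub hc⟩
          ≤ sptHeight G'B w T u hT.u_mem :=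
            le_iSup (fun x : T.verts =>
              wdist T.coe (fun a b => w a.1 b.1) ⟨u, hT.u_mem⟩ x) ⟨c, hT.C_sub hc⟩
        _ = gammaH G w cst B C u := hmin
        _ ≤ Dopt := hgam
    have hle : G ≤ G'B := by
      obtain ⟨F, -, -, rfl⟩ := haug
      exact le_sup_left
    have hmono : ∀ a b : V, wdist G'B w a b ≤ wdist G w a b := fun a b =>
      SPTAux.wdist_map_le (SimpleGraph.Hom.ofLE hle) w w (fun _ _ _ => rfl) a b
    rw [wdiam]
    refine iSup_le fun x => iSup_le fun y => ?_
    obtain ⟨cx, hcx, hdx⟩ := hcov x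
    obtain ⟨cy, hcy, hdy⟩ := hcov y
    have t1 : wdist G'B w x cx ≤ Dopt := (hmono x cx).trans hdx
    have t2 : wdist G'B w cx u ≤ Dopt := by
      rw [SPTAux.wdist_comm w hw cx u]
      exact hub cx hcx
    have t3 : wdist G'B w u cy ≤ Dopt := hub cy hcy
    have t4 : wdist G'B w cy y ≤ Dopt := by
      rw [SPTAux.wdist_comm w hw cy y]
      exact (hmono y cy).trans hdy
    calc wdist G'B w x y
        ≤ wdist G'B w x cx + wdist G'B w cx y := SPTAux.wdist_triangle w x cx y
      _ ≤ wdist G'B w x cx + (wdist G'B w cx u + wdist G'B w u y) :=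
          add_le_add_right (SPTAux.wdist_triangle w cx u y) _
      _ ≤ wdist G'B w x cx + (wdist G'B w cx u + (wdist G'B w u cy + wdist G'B w cy y)) :=
          add_le_add_right (add_le_add_right (SPTAux.wdist_triangle w u cy y) _) _
      _ ≤ Dopt + (Dopt + (Dopt + Dopt)) :=
          add_le_add t1 (add_le_add t2 (add_le_add t3 t4))
      _ = 4 * Dopt := by ring
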